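/- Let A ∈ ℝ^{n×n}, C ∈ ℝ^{n_y×n}, and L ∈ ℝ^{n×n_y} with ρ(|A − L C|) < 1. Then there exist a diagonal positive definite P, Y = P L, and X = |P A − Y C| such that [[P, X],[Xᵀ, P]] is positive definite and |P A − Y C| ≤ X. (Converse direction of the LMI characterization.) -/

import Mathlib

open Matrix Finset

noncomputable section

/-- Entrywise absolute value of a matrix. -/
def entAbs {m n : Type*} (A : Matrix m n ℝ) : Matrix m n ℝ := fun i j => |A i j|

/-- Spectral radius of a real matrix, via its complex spectrum. -/
def specRad {n : Type*} [Fintype n] [DecidableEq n] (A : Matrix n n ℝ) : ENNReal :=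
  spectralRadius ℂ (A.map (algebraMap ℝ ℂ))

section AuxLemmas

open Filter

attribute [local instance] Matrix.linftyOpNormedRing Matrix.linftyOpNormedAlgebra

lemma spectrum_transpose_aux {n : ℕ} (B : Matrix (Fin n) (Fin n) ℂ) :
    spectrum ℂ Bᵀ = spectrum ℂ B := by
  ext lam
  simp only [spectrum.mem_iff]
  have : (algebraMap ℂ (Matrix (Fin n) (Fin n) ℂ) lam - B)ᵀ
      = algebraMap ℂ (Matrix (Fin n) (Fin n) ℂ) lam - Bᵀ := by
    rw [transpose_sub]
    congr 1
    rw [Matrix.algebraMap_eq_diagonal, diagonal_transpose]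
  rw [← this]
  constructor <;> intro h hc <;> apply h
  · rw [Matrix.isUnit_iff_isUnit_det, Matrix.det_transpose, ← Matrix.isUnit_iff_isUnit_det]
    exact hc
  · rw [Matrix.isUnit_iff_isUnit_det, Matrix.det_transpose, ← Matrix.isUnit_iff_isUnit_det] at hc
    exact hc

lemma specRad_transpose_aux {n : ℕ} (B : Matrix (Fin n) (Fin n) ℝ) :
    specRad Bᵀ = specRad B := by
  unfold specRad
  rw [Matrix.transpose_map]
  unfold spectralRadius
  rw [spectrum_transpose_aux]

lemma pow_nonneg_ent {n : ℕ} {M : Matrix (Fin n) (Fin n) ℝ} (hM : ∀ i j, 0 ≤ M i j) (k : ℕ) :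
    ∀ i j, 0 ≤ (M ^ k) i j := by
  induction k with
  | zero => intro i j; by_cases h : i = j <;> simp [pow_zero, Matrix.one_apply, h]
  | succ k ih =>
    intro i j
    rw [pow_succ, Matrix.mul_apply]
    exact Finset.sum_nonneg fun t _ => mul_nonneg (ih i t) (hM t j)

lemma exists_contraction_vec {n : ℕ} {M : Matrix (Fin n) (Fin n) ℝ}
    (hM : ∀ i j, 0 ≤ M i j) (h : specRad M < 1) :
    ∃ (r : ℝ) (v : Fin n → ℝ), 0 < r ∧ r < 1 ∧ (∀ i, 1 ≤ v i) ∧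
      ∀ i, (M *ᵥ v) i ≤ r * v i := by
  set Bc : Matrix (Fin n) (Fin n) ℂ := M.map (algebraMap ℝ ℂ) with hBc
  obtain ⟨r, k, hr0, hr1, hrk⟩ :
      ∃ (r : NNReal) (k : ℕ), 0 < r ∧ r < 1 ∧ ‖Bc ^ (k+1)‖₊ < r ^ (k+1) := by
    obtain ⟨r, hra, hrb⟩ := ENNReal.lt_iff_exists_nnreal_btwn.mp h
    have hr0 : 0 < r := by
      rcases eq_or_lt_of_le (zero_le : (0:NNReal) ≤ r) with h0 | h0
      · exfalso; rw [← h0] at hra; simp at hra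
      · exact h0
    have hG := spectrum.pow_nnnorm_pow_one_div_tendsto_nhds_spectralRadius Bc
    have hev : ∀ᶠ m : ℕ in atTop, ((‖Bc ^ m‖₊ : ENNReal) ^ (1/(m:ℝ))) < (r : ENNReal) :=
      hG.eventually_lt_const hra
    obtain ⟨m, hm⟩ := (hev.and (eventually_ge_atTop 1)).exists
    obtain ⟨k, rfl⟩ : ∃ k, m = k + 1 := ⟨m - 1, by omega⟩
    refine ⟨r, k, hr0, by exact_mod_cast hrb, ?_⟩
    have hmne : (((k+1:ℕ)):ℝ) ≠ 0 := by positivity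
    have h2 := ENNReal.rpow_lt_rpow hm.1 (by positivity : (0:ℝ) < ((k+1:ℕ):ℝ))
    rw [← ENNReal.rpow_mul, one_div, inv_mul_cancel₀ hmne, ENNReal.rpow_one,
      ENNReal.rpow_natCast, ← ENNReal.coe_pow, ENNReal.coe_lt_coe] at h2
    exact h2
  set K := k + 1 with hK
  have hrow : ∀ i, ∑ j, (M ^ K) i j < (r:ℝ) ^ K := by
    intro i
    have hmap : Bc ^ K = (M ^ K).map (algebraMap ℝ ℂ) := by
      rw [hBc, ← RingHom.mapMatrix_apply, ← RingHom.mapMatrix_apply, ← map_pow]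
    have hle : ∑ j, ‖(Bc ^ K) i j‖₊ ≤ ‖Bc ^ K‖₊ := by
      rw [Matrix.linfty_opNNNorm_def]
      exact Finset.le_sup (f := fun i => ∑ j : Fin n, ‖(Bc ^ K) i j‖₊) (Finset.mem_univ i)
    have hlt : ∑ j, ‖(Bc ^ K) i j‖₊ < r ^ K := lt_of_le_of_lt hle hrk
    have heq : ∀ j, ‖(Bc ^ K) i j‖₊ = ‖(M ^ K) i j‖₊ := by
      intro j
      rw [hmap]
      simp [Matrix.map_apply, Complex.coe_algebraMap]
    rw [Finset.sum_congr rfl fun j _ => heq j] at hlt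
    have hlt' := (NNReal.coe_lt_coe).mpr hlt
    push_cast at hlt'
    calc ∑ j, (M ^ K) i j = ∑ j, |(M ^ K) i j| :=
          Finset.sum_congr rfl fun j _ => (abs_of_nonneg (pow_nonneg_ent hM K i j)).symm
    _ < (r:ℝ) ^ K := by simpa using hlt'
  set rr : ℝ := (r : ℝ) with hrr
  have hrr0 : 0 < rr := hr0
  have hrr1 : rr < 1 := by exact_mod_cast hr1
  set s : ℝ := rr⁻¹ with hs
  have hrs : rr * s = 1 := mul_inv_cancel₀ hrr0.ne'
  have hs0 : 0 < s := inv_pos.mpr hrr0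
  set o : Fin n → ℝ := fun _ => 1 with ho
  set a : ℕ → Fin n → ℝ := fun t => (M ^ t) *ᵥ o with ha
  have ha_nonneg : ∀ t i, 0 ≤ a t i := by
    intro t i
    simp only [ha, Matrix.mulVec, dotProduct, ho]
    exact Finset.sum_nonneg fun j _ => mul_nonneg (pow_nonneg_ent hM t i j) zero_le_one
  have ha0 : ∀ i, a 0 i = 1 := by
    intro i; simp [ha, pow_zero, Matrix.one_mulVec, ho]
  have haK : ∀ i, a K i ≤ rr ^ K := by
    intro i
    have : a K i = ∑ j, (M ^ K) i j := by simp [ha, ho, Matrix.mulVec, dotProduct]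
    rw [this]; exact (hrow i).le
  have hMa : ∀ t, M *ᵥ a t = a (t + 1) := by
    intro t
    show M *ᵥ (M ^ t *ᵥ o) = M ^ (t + 1) *ᵥ o
    rw [Matrix.mulVec_mulVec, ← pow_succ']
  set v : Fin n → ℝ := fun i => ∑ t ∈ Finset.range K, s ^ t * a t i with hv
  refine ⟨rr, v, hrr0, hrr1, ?_, ?_⟩
  · intro i
    have h1 : s ^ 0 * a 0 i ≤ v i := by
      refine Finset.single_le_sum (f := fun t => s ^ t * a t i) ?_ ?_
      · exact fun t _ => mul_nonneg (pow_nonneg hs0.le t) (ha_nonneg t i)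
      · exact Finset.mem_range.mpr (by omega)
    simpa [ha0 i] using h1
  · intro i
    have hMv : (M *ᵥ v) i = ∑ t ∈ Finset.range K, s ^ t * a (t + 1) i := by
      simp only [Matrix.mulVec, dotProduct, hv]
      simp_rw [Finset.mul_sum]
      rw [Finset.sum_comm]
      refine Finset.sum_congr rfl fun t _ => ?_
      rw [← hMa t]
      simp only [Matrix.mulVec, dotProduct, Finset.mul_sum]
      exact Finset.sum_congr rfl fun x _ => by ring
    have hshift : ∑ t ∈ Finset.range K, s ^ (t+1) * a (t+1) i = v i + s ^ K * a K i - 1 := by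
      have h1 := Finset.sum_range_succ' (fun t => s ^ t * a t i) K
      have h2 := Finset.sum_range_succ (fun t => s ^ t * a t i) K
      rw [h2] at h1
      simp only [pow_zero, one_mul, ha0 i] at h1
      simp only [hv]
      linarith
    have hrew : ∑ t ∈ Finset.range K, s ^ t * a (t+1) i
        = rr * ∑ t ∈ Finset.range K, s ^ (t+1) * a (t+1) i := by
      rw [Finset.mul_sum]
      refine Finset.sum_congr rfl fun t _ => ?_
      rw [pow_succ', ← mul_assoc, ← mul_assoc, hrs, one_mul]
    have hsK : s ^ K * a K i ≤ 1 := by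
      calc s ^ K * a K i ≤ s ^ K * rr ^ K :=
            mul_le_mul_of_nonneg_left (haK i) (pow_nonneg hs0.le K)
      _ = (s * rr) ^ K := (mul_pow s rr K).symm
      _ = 1 := by rw [mul_comm, hrs, one_pow]
    rw [hMv, hrew, hshift]
    have : v i + s ^ K * a K i - 1 ≤ v i := by linarith
    exact mul_le_mul_of_nonneg_left this hrr0.le

lemma lyap {n : ℕ} {M : Matrix (Fin n) (Fin n) ℝ} (hM : ∀ i j, 0 ≤ M i j)
    {r : ℝ} (hr0 : 0 < r) (hr1 : r < 1)
    {v u : Fin n → ℝ} (hv : ∀ i, 1 ≤ v i) (hu : ∀ i, 1 ≤ u i)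
    (hMv : ∀ i, (M *ᵥ v) i ≤ r * v i) (hMu : ∀ i, (Mᵀ *ᵥ u) i ≤ r * u i) :
    (Matrix.diagonal (fun i => u i / v i)
      - Mᵀ * Matrix.diagonal (fun i => u i / v i) * M).PosDef := by
  set p : Fin n → ℝ := fun i => u i / v i with hp
  have hv0 : ∀ i, 0 < v i := fun i => lt_of_lt_of_le one_pos (hv i)
  have hp0 : ∀ i, 0 < p i := fun i => div_pos (lt_of_lt_of_le one_pos (hu i)) (hv0 i)
  set P := Matrix.diagonal p with hP
  refine posDef_iff_dotProduct_mulVec.mpr ⟨?_, ?_⟩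
  · show (P - Mᵀ * P * M)ᴴ = _
    rw [conjTranspose_eq_transpose_of_trivial]
    simp [transpose_sub, transpose_mul, hP, Matrix.mul_assoc]
  · intro x hx
    have hstar : star x = x := by simp
    rw [hstar]
    have hform : x ⬝ᵥ ((P - Mᵀ * P * M) *ᵥ x)
        = ∑ i, p i * x i ^ 2 - ∑ i, p i * (M *ᵥ x) i ^ 2 := by
      rw [Matrix.sub_mulVec, dotProduct_sub]
      congr 1
      · simp [hP, Matrix.mulVec_diagonal, dotProduct]
        exact Finset.sum_congr rfl fun i _ => by ring
      · rw [Matrix.mul_assoc, ← Matrix.mulVec_mulVec, ← Matrix.mulVec_mulVec,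
          Matrix.dotProduct_mulVec, Matrix.vecMul_transpose]
        simp [hP, Matrix.mulVec_diagonal, dotProduct]
        exact Finset.sum_congr rfl fun i _ => by ring
    rw [hform]
    have hS1pos : 0 < ∑ i, p i * x i ^ 2 := by
      obtain ⟨i, hi⟩ := Function.ne_iff.mp hx
      refine Finset.sum_pos' (fun j _ => mul_nonneg (hp0 j).le (sq_nonneg _))
        ⟨i, Finset.mem_univ i, mul_pos (hp0 i) ?_⟩
      exact lt_of_le_of_ne (sq_nonneg _) (Ne.symm (pow_ne_zero 2 hi))
    have key : ∑ i, p i * (M *ᵥ x) i ^ 2 ≤ r ^ 2 * ∑ i, p i * x i ^ 2 := by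
      have gsum_nonneg : ∀ i, 0 ≤ ∑ j, M i j * x j ^ 2 / v j := fun i =>
        Finset.sum_nonneg fun j _ =>
          div_nonneg (mul_nonneg (hM i j) (sq_nonneg _)) (hv0 j).le
      have step1 : ∀ i, (M *ᵥ x) i ^ 2 ≤ (r * v i) * ∑ j, M i j * x j ^ 2 / v j := by
        intro i
        have hcs := Finset.sum_sq_le_sum_mul_sum_of_sq_eq_mul Finset.univ
          (r := fun j => M i j * x j) (f := fun j => M i j * v j)
          (g := fun j => M i j * x j ^ 2 / v j)
          (fun j _ => mul_nonneg (hM i j) (hv0 j).le)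
          (fun j _ => div_nonneg (mul_nonneg (hM i j) (sq_nonneg _)) (hv0 j).le)
          (fun j _ => by
            have hvj : v j ≠ 0 := (hv0 j).ne'
            field_simp)
        have h2 : ∑ j, M i j * v j = (M *ᵥ v) i := by simp [Matrix.mulVec, dotProduct]
        have h3 : (M *ᵥ x) i = ∑ j, M i j * x j := by simp [Matrix.mulVec, dotProduct]
        rw [h3]
        calc (∑ j, M i j * x j) ^ 2 ≤ (∑ j, M i j * v j) * ∑ j, M i j * x j ^ 2 / v j := hcs
        _ ≤ (r * v i) * ∑ j, M i j * x j ^ 2 / v j := by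
            rw [h2]
            exact mul_le_mul_of_nonneg_right (hMv i) (gsum_nonneg i)
      calc ∑ i, p i * (M *ᵥ x) i ^ 2
          ≤ ∑ i, p i * ((r * v i) * ∑ j, M i j * x j ^ 2 / v j) := by
            refine Finset.sum_le_sum fun i _ => ?_
            exact mul_le_mul_of_nonneg_left (step1 i) (hp0 i).le
      _ = r * ∑ i, ∑ j, u i * (M i j * x j ^ 2 / v j) := by
            rw [Finset.mul_sum]
            refine Finset.sum_congr rfl fun i _ => ?_
            rw [Finset.mul_sum, Finset.mul_sum, Finset.mul_sum]
            refine Finset.sum_congr rfl fun j _ => ?_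
            have hvi : v i ≠ 0 := (hv0 i).ne'
            have hvj : v j ≠ 0 := (hv0 j).ne'
            simp only [hp]
            field_simp
      _ = r * ∑ j, (x j ^ 2 / v j) * (Mᵀ *ᵥ u) j := by
            congr 1
            rw [Finset.sum_comm]
            refine Finset.sum_congr rfl fun j _ => ?_
            simp only [Matrix.mulVec, dotProduct, transpose_apply, Finset.mul_sum]
            refine Finset.sum_congr rfl fun i _ => ?_
            ring
      _ ≤ r * ∑ j, (x j ^ 2 / v j) * (r * u j) := by
            refine mul_le_mul_of_nonneg_left ?_ hr0.le
            refine Finset.sum_le_sum fun j _ => ?_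
            exact mul_le_mul_of_nonneg_left (hMu j)
              (div_nonneg (sq_nonneg _) (hv0 j).le)
      _ = r ^ 2 * ∑ j, p j * x j ^ 2 := by
            rw [Finset.mul_sum, Finset.mul_sum]
            refine Finset.sum_congr rfl fun j _ => ?_
            have hvj : v j ≠ 0 := (hv0 j).ne'
            simp only [hp]
            field_simp
    have hr2 : r ^ 2 < 1 := by nlinarith
    have hprod : 0 < (1 - r ^ 2) * ∑ i, p i * x i ^ 2 :=
      mul_pos (by linarith) hS1pos
    nlinarith [key, hprod]

lemma fromBlocks_posDef {m l : Type*} [Fintype m] [DecidableEq m] [Fintype l] [DecidableEq l]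
    {A : Matrix m m ℝ} {B : Matrix m l ℝ} {D : Matrix l l ℝ}
    (hA : A.PosDef)
    (h : (D - Bᴴ * A⁻¹ * B).PosDef) : (Matrix.fromBlocks A B Bᴴ D).PosDef := by
  haveI := A.invertibleOfIsUnitDet hA.det_pos.ne'.isUnit
  refine posDef_iff_dotProduct_mulVec.mpr ⟨(Matrix.IsHermitian.fromBlocks₁₁ _ _ hA.1).mpr h.1, fun z hz => ?_⟩
  rw [← Sum.elim_comp_inl_inr z, dotProduct_mulVec,
    Matrix.schur_complement_eq₁₁ B D _ _ hA.1]
  by_cases hy : z ∘ Sum.inr = 0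
  · have hx : z ∘ Sum.inl ≠ 0 := by
      intro hx0
      apply hz
      ext (i | i)
      · exact congrFun hx0 i
      · exact congrFun hy i
    rw [hy]
    simp only [Matrix.mulVec_zero, add_zero, star_zero, Matrix.zero_vecMul,
      zero_dotProduct, add_zero]
    rw [← Matrix.dotProduct_mulVec]
    exact hA.dotProduct_mulVec_pos hx
  · have h1 : 0 ≤ star (z ∘ Sum.inl + (A⁻¹ * B) *ᵥ (z ∘ Sum.inr)) ᵥ* A
        ⬝ᵥ (z ∘ Sum.inl + (A⁻¹ * B) *ᵥ (z ∘ Sum.inr)) := by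
      rw [← Matrix.dotProduct_mulVec]
      exact hA.posSemidef.dotProduct_mulVec_nonneg _
    have h2 : 0 < star (z ∘ Sum.inr) ᵥ* (D - Bᴴ * A⁻¹ * B) ⬝ᵥ (z ∘ Sum.inr) := by
      rw [← Matrix.dotProduct_mulVec]
      exact h.dotProduct_mulVec_pos hy
    linarith

end AuxLemmas

theorem abs_schur_implies_lmi {n ny : ℕ}
    (A : Matrix (Fin n) (Fin n) ℝ) (C : Matrix (Fin ny) (Fin n) ℝ)
    (L : Matrix (Fin n) (Fin ny) ℝ)
    (hL : specRad (entAbs (A - L * C)) < 1) :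
    ∃ (P : Matrix (Fin n) (Fin n) ℝ) (Y : Matrix (Fin n) (Fin ny) ℝ)
      (X : Matrix (Fin n) (Fin n) ℝ), P.IsDiag ∧ P.PosDef ∧ Y = P * L ∧ X = entAbs (P * A - Y * C) ∧
      (Matrix.fromBlocks P X Xᵀ P).PosDef ∧
      ∀ i j, |(P * A - Y * C) i j| ≤ X i j := by
  classical
  set M : Matrix (Fin n) (Fin n) ℝ := entAbs (A - L * C) with hMdef
  have hM : ∀ i j, 0 ≤ M i j := fun i j => abs_nonneg _
  have hMT : ∀ i j, 0 ≤ Mᵀ i j := fun i j => abs_nonneg _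
  have hLT : specRad Mᵀ < 1 := by rw [specRad_transpose_aux]; exact hL
  obtain ⟨r1, v, hr10, hr11, hv, hMv⟩ := exists_contraction_vec hM hL
  obtain ⟨r2, u, hr20, hr21, hu, hMu⟩ := exists_contraction_vec hMT hLT
  set r := max r1 r2 with hrdef
  have hr0 : 0 < r := lt_max_of_lt_left hr10
  have hr1 : r < 1 := max_lt hr11 hr21
  have hv1 : ∀ i, 0 ≤ v i := fun i => le_trans zero_le_one (hv i)
  have hu1 : ∀ i, 0 ≤ u i := fun i => le_trans zero_le_one (hu i)
  have hMv' : ∀ i, (M *ᵥ v) i ≤ r * v i := fun i =>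
    (hMv i).trans (mul_le_mul_of_nonneg_right (le_max_left _ _) (hv1 i))
  have hMu' : ∀ i, (Mᵀ *ᵥ u) i ≤ r * u i := fun i =>
    (hMu i).trans (mul_le_mul_of_nonneg_right (le_max_right _ _) (hu1 i))
  have hp0 : ∀ i, 0 < u i / v i := fun i =>
    div_pos (lt_of_lt_of_le one_pos (hu i)) (lt_of_lt_of_le one_pos (hv i))
  set P : Matrix (Fin n) (Fin n) ℝ := Matrix.diagonal (fun i => u i / v i) with hPdef
  have hPD : P.PosDef := Matrix.posDef_diagonal_iff.mpr hp0
  have hQ : (P - Mᵀ * P * M).PosDef := lyap hM hr0 hr1 hv hu hMv' hMu'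
  have hXPM : entAbs (P * A - P * L * C) = P * M := by
    have h1 : P * A - P * L * C = P * (A - L * C) := by
      rw [Matrix.mul_sub, Matrix.mul_assoc]
    rw [h1]
    ext i j
    show |(P * (A - L * C)) i j| = (P * M) i j
    rw [hPdef, Matrix.diagonal_mul, Matrix.diagonal_mul, abs_mul,
      abs_of_pos (hp0 i)]
    rfl
  refine ⟨P, P * L, entAbs (P * A - P * L * C), Matrix.isDiag_diagonal _, hPD, rfl, rfl,
    ?_, fun i j => le_of_eq rfl⟩
  rw [hXPM]
  have hXT : (P * M)ᵀ = (P * M)ᴴ := (conjTranspose_eq_transpose_of_trivial _).symm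
  rw [hXT]
  apply fromBlocks_posDef hPD
  have hsimp : (P * M)ᴴ * P⁻¹ * (P * M) = Mᵀ * P * M := by
    rw [conjTranspose_eq_transpose_of_trivial, transpose_mul]
    rw [hPdef, Matrix.diagonal_transpose, ← hPdef]
    rw [Matrix.mul_assoc (Mᵀ * P) P⁻¹ (P * M), ← Matrix.mul_assoc P⁻¹ P M,
      Matrix.nonsing_inv_mul P hPD.det_pos.ne'.isUnit, Matrix.one_mul,
      Matrix.mul_assoc]
  rw [hsimp]
  exact hQ
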